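/- arXiv:2207.03259 — 8 statements merged into one kernel-verified Lean document; each statement's English description precedes it below -/
import Mathlib

section
/- Let T be a group and G ≤ T a subgroup that is not a cyclic p-group and contains a unique minimal normal subgroup S. Then there exists H ≤ T with H' = G (the derived subgroup of H equals G) if and only if there exists a subgroup K of N_T(S)/S with K' = G/S. -/
open scoped commutatorElement

lemma aux_conj_map_self {T : Type*} [Group T] {H : Subgroup T} {h : T} (hh : h ∈ H) :
    H.map (MulAut.conj h).toMonoidHom = H := by
  apply le_antisymm
  · rintro x ⟨y, hy, rfl⟩
    simpa using H.mul_mem (H.mul_mem hh hy) (H.inv_mem hh)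
  · intro x hx
    exact ⟨h⁻¹ * x * h, by simpa using H.mul_mem (H.mul_mem (H.inv_mem hh) hx) hh,
      by simp [mul_assoc]⟩

lemma aux_conj_commutator_mem {T : Type*} [Group T] {H : Subgroup T} {h d : T}
    (hh : h ∈ H) (hd : d ∈ ⁅H, H⁆) : h * d * h⁻¹ ∈ ⁅H, H⁆ := by
  have hmap : (⁅H, H⁆ : Subgroup T).map (MulAut.conj h).toMonoidHom = ⁅H, H⁆ := by
    rw [Subgroup.map_commutator, aux_conj_map_self hh]
  rw [← hmap]
  exact ⟨d, hd, by simp [mul_assoc]⟩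

lemma aux_commutator_le_self {T : Type*} [Group T] (H : Subgroup T) :
    (⁅H, H⁆ : Subgroup T) ≤ H := by
  refine Subgroup.commutator_le.mpr fun g hg h hh => ?_
  rw [commutatorElement_def]
  exact H.mul_mem (H.mul_mem (H.mul_mem hg hh) (H.inv_mem hg)) (H.inv_mem hh)

lemma aux_le_normalizer {T : Type*} [Group T] {G S : Subgroup T} (hSG : S ≤ G)
    (hSnormal : (S.subgroupOf G).Normal) : G ≤ (Subgroup.normalizer (S : Set T)) := by
  intro g hg
  rw [Subgroup.mem_normalizer_iff]
  intro x
  constructor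
  · intro hx
    have := hSnormal.conj_mem ⟨x, hSG hx⟩ (by simpa [Subgroup.mem_subgroupOf] using hx) ⟨g, hg⟩
    simpa [Subgroup.mem_subgroupOf] using this
  · intro hx
    have := hSnormal.conj_mem ⟨g * x * g⁻¹, hSG hx⟩
      (by simpa [Subgroup.mem_subgroupOf] using hx) ⟨g⁻¹, G.inv_mem hg⟩
    simpa [Subgroup.mem_subgroupOf, mul_assoc] using this

lemma aux_cyclic {T : Type*} [Group T] (G : Subgroup T) (hGbot : G ≠ ⊥)
    (hall : ∀ N : Subgroup T, N ≤ G → N ≠ ⊥ → N = G) :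
    IsCyclic G ∧ ∃ p : ℕ, p.Prime ∧ IsPGroup p G := by
  obtain ⟨g, hgG, hg1⟩ := G.bot_or_exists_ne_one.resolve_left hGbot
  have hfin : IsOfFinOrder g := by
    by_cases h2 : g ^ 2 = 1
    · exact isOfFinOrder_iff_pow_eq_one.mpr ⟨2, two_pos, h2⟩
    · have hz2 : Subgroup.zpowers (g ^ 2) = G :=
        hall _ (Subgroup.zpowers_le.mpr (G.pow_mem hgG 2)) (Subgroup.zpowers_ne_bot.2 h2)
      have hg' : g ∈ Subgroup.zpowers (g ^ 2) := hz2 ▸ hgG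
      obtain ⟨k, hk⟩ := Subgroup.mem_zpowers_iff.mp hg'
      rw [isOfFinOrder_iff_zpow_eq_one]
      refine ⟨2 * k - 1, by omega, ?_⟩
      rw [← zpow_natCast g 2, ← zpow_mul] at hk
      push_cast at hk
      rw [zpow_sub, zpow_one, hk, mul_inv_cancel]
  have hn0 : orderOf g ≠ 0 := orderOf_eq_zero_iff.not_left.mpr (by simpa using hfin)
  have hn1 : orderOf g ≠ 1 := by simpa [orderOf_eq_one_iff] using hg1
  set n := orderOf g with hn
  set p := n.minFac with hpdef
  have hp : p.Prime := Nat.minFac_prime hn1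
  have hdvd : p ∣ n := Nat.minFac_dvd n
  have horder : orderOf (g ^ (n / p)) = p := by
    rw [orderOf_pow' _ (by
        have := Nat.div_pos (Nat.minFac_le (Nat.pos_of_ne_zero hn0)) hp.pos
        exact this.ne'), ← hn, Nat.gcd_eq_right (Nat.div_dvd_of_dvd hdvd),
      Nat.div_div_self hdvd hn0]
  have hh1 : g ^ (n / p) ≠ 1 := by
    intro e
    rw [e, orderOf_one] at horder
    exact hp.ne_one horder.symm
  have hzh : Subgroup.zpowers (g ^ (n / p)) = G :=
    hall _ (Subgroup.zpowers_le.mpr (G.pow_mem hgG _)) (Subgroup.zpowers_ne_bot.2 hh1)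
  have hcard : Nat.card G = p := by rw [← hzh, Nat.card_zpowers, horder]
  haveI : Fact p.Prime := ⟨hp⟩
  exact ⟨isCyclic_of_prime_card hcard, p, hp, IsPGroup.of_card (by rw [hcard, pow_one])⟩

/-- Lemma 2.2(1): Let `T` be a group and `G ≤ T` a subgroup that is not a cyclic `p`-group
and contains a unique minimal normal subgroup `S` (i.e. `S` is a nontrivial normal subgroup
of `G` contained in every nontrivial normal subgroup of `G`).  Then `G` is integrable
within `T` iff `G/S` is integrable within `N_T(S)/S`. -/
theorem stmt0 {T : Type*} [Group T] (G S : Subgroup T) (hSG : S ≤ G)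
    (hnotcyc : ¬ (IsCyclic G ∧ ∃ p : ℕ, p.Prime ∧ IsPGroup p G))
    (hSbot : S ≠ ⊥) (hSnormal : (S.subgroupOf G).Normal)
    (hmono : ∀ N : Subgroup T, N ≤ G → N ≠ ⊥ → (N.subgroupOf G).Normal → S ≤ N) :
    (∃ H : Subgroup T, ⁅H, H⁆ = G) ↔
      (∃ K : Subgroup ((Subgroup.normalizer (S : Set T)) ⧸ S.subgroupOf (Subgroup.normalizer (S : Set T))),
        ⁅K, K⁆ = (G.subgroupOf (Subgroup.normalizer (S : Set T))).map
          (QuotientGroup.mk' (S.subgroupOf (Subgroup.normalizer (S : Set T))))) := by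
  constructor
  · rintro ⟨H, hH⟩
    have hGH : G ≤ H := hH ▸ aux_commutator_le_self H
    have hconjG : ∀ h ∈ H, G.map (MulAut.conj h).toMonoidHom = G := by
      intro h hh
      rw [← hH, Subgroup.map_commutator, aux_conj_map_self hh]
    have key : ∀ h ∈ H, S ≤ S.map (MulAut.conj h).toMonoidHom := by
      intro h hh
      apply hmono
      · exact le_trans (Subgroup.map_mono hSG) (hconjG h hh).le
      · intro e
        exact hSbot ((Subgroup.map_eq_bot_iff_of_injective _ (MulAut.conj h).injective).mp e)
      · constructor
        intro n hn g
        rw [Subgroup.mem_subgroupOf] at hn ⊢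
        obtain ⟨s, hs, hsn⟩ := hn
        have haG : h⁻¹ * ↑g * h ∈ G := by
          have hmem : h⁻¹ * ↑g * h ∈ G.map (MulAut.conj h⁻¹).toMonoidHom :=
            ⟨↑g, g.2, by simp [mul_assoc]⟩
          rwa [hconjG h⁻¹ (H.inv_mem hh)] at hmem
        have hsc : (h⁻¹ * ↑g * h) * s * (h⁻¹ * ↑g * h)⁻¹ ∈ S := by
          have := hSnormal.conj_mem ⟨s, hSG hs⟩
            (by simpa [Subgroup.mem_subgroupOf] using hs) ⟨h⁻¹ * ↑g * h, haG⟩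
          simpa [Subgroup.mem_subgroupOf, mul_assoc] using this
        refine ⟨_, hsc, ?_⟩
        simp only [Subgroup.coe_mul, Subgroup.coe_inv]
        rw [← hsn]
        simp only [MulEquiv.coe_toMonoidHom, MulAut.conj_apply]
        group
    have hstab : ∀ h ∈ H, S.map (MulAut.conj h).toMonoidHom = S := by
      intro h hh
      refine le_antisymm ?_ (key h hh)
      rintro x ⟨s, hs, rfl⟩
      obtain ⟨s', hs', he⟩ := key h⁻¹ (H.inv_mem hh) hs
      rw [← he]
      simpa [mul_assoc] using hs'
    have hHle : H ≤ (Subgroup.normalizer (S : Set T)) := by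
      intro h hh
      rw [Subgroup.mem_normalizer_iff]
      intro x
      constructor
      · intro hx
        rw [← hstab h hh]
        exact ⟨x, hx, by simp⟩
      · intro hx
        rw [← hstab h⁻¹ (H.inv_mem hh)]
        exact ⟨h * x * h⁻¹, hx, by simp [mul_assoc]⟩
    refine ⟨(H.subgroupOf (Subgroup.normalizer (S : Set T))).map (QuotientGroup.mk' (S.subgroupOf (Subgroup.normalizer (S : Set T)))), ?_⟩
    rw [← Subgroup.map_commutator]
    congr 1
    apply Subgroup.map_injective (Subgroup.normalizer (S : Set T)).subtype_injective
    rw [Subgroup.map_commutator, Subgroup.subgroupOf_map_subtype, Subgroup.subgroupOf_map_subtype,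
      inf_of_le_left hHle, inf_of_le_left (hGH.trans hHle), hH]
  · rintro ⟨K, hK⟩
    have hGN : G ≤ (Subgroup.normalizer (S : Set T)) := aux_le_normalizer hSG hSnormal
    have hSle : S ≤ (Subgroup.normalizer (S : Set T)) := Subgroup.le_normalizer
    set N := (Subgroup.normalizer (S : Set T)) with hNdef
    set SN := S.subgroupOf N with hSNdef
    set π := QuotientGroup.mk' SN with hπdef
    set H₀ := K.comap π with hH₀def
    have hker : π.ker = SN := QuotientGroup.ker_mk' SN
    have hsurj : Function.Surjective π := QuotientGroup.mk'_surjective SN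
    have hmapH₀ : H₀.map π = K := Subgroup.map_comap_eq_self_of_surjective hsurj K
    have hSNle : SN ≤ G.subgroupOf N := by
      intro x hx
      rw [Subgroup.mem_subgroupOf] at hx ⊢
      exact hSG hx
    have hcomm : (⁅H₀, H₀⁆ : Subgroup N) ⊔ SN = G.subgroupOf N := by
      have h1 : (⁅H₀, H₀⁆ : Subgroup N).map π = (G.subgroupOf N).map π := by
        rw [Subgroup.map_commutator, hmapH₀, hK]
      have h2 := congrArg (Subgroup.comap π) h1
      rwa [Subgroup.comap_map_eq, Subgroup.comap_map_eq, hker,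
        sup_eq_left.mpr hSNle] at h2
    have hDS : (⁅H₀.map N.subtype, H₀.map N.subtype⁆ : Subgroup T) ⊔ S = G := by
      have h3 := congrArg (Subgroup.map N.subtype) hcomm
      rwa [Subgroup.map_sup, Subgroup.map_commutator, Subgroup.subgroupOf_map_subtype,
        Subgroup.subgroupOf_map_subtype, inf_of_le_left hSle, inf_of_le_left hGN] at h3
    have hSH : S ≤ H₀.map N.subtype := by
      have h1 : SN ≤ H₀ := by
        intro x hx
        have hx1 : π x = 1 := by rw [← MonoidHom.mem_ker, hker]; exact hx
        show π x ∈ K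
        rw [hx1]; exact K.one_mem
      calc S = SN.map N.subtype := by
              rw [Subgroup.subgroupOf_map_subtype, inf_of_le_left hSle]
        _ ≤ H₀.map N.subtype := Subgroup.map_mono h1
    have hGH : G ≤ H₀.map N.subtype := by
      rw [← hDS]
      exact sup_le (aux_commutator_le_self _) hSH
    by_cases hD : (⁅H₀.map N.subtype, H₀.map N.subtype⁆ : Subgroup T) = ⊥
    · have hGS : G = S := by rw [← hDS, hD, bot_sup_eq]
      have habel : ∀ a ∈ G, ∀ b ∈ G, a * b = b * a := by
        intro a ha b hb
        have hc : ⁅a, b⁆ ∈ (⊥ : Subgroup T) :=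
          hD ▸ Subgroup.commutator_mem_commutator (hGH ha) (hGH hb)
        rw [Subgroup.mem_bot, commutatorElement_def] at hc
        have h' : a * b * (b * a)⁻¹ = 1 := by
          rw [mul_inv_rev, ← mul_assoc]; exact hc
        exact mul_inv_eq_one.mp h'
      have hall : ∀ N' : Subgroup T, N' ≤ G → N' ≠ ⊥ → N' = G := by
        intro N' hle hne
        refine le_antisymm hle ?_
        rw [hGS]
        refine hmono N' hle hne ?_
        constructor
        intro n hn g
        rw [Subgroup.mem_subgroupOf] at hn ⊢
        simp only [Subgroup.coe_mul, Subgroup.coe_inv]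
        rw [habel ↑g g.2 ↑n n.2, mul_inv_cancel_right]
        exact hn
      exact absurd (aux_cyclic G (by rw [hGS]; exact hSbot) hall) hnotcyc
    · refine ⟨H₀.map N.subtype, ?_⟩
      have hDnorm : (((⁅H₀.map N.subtype, H₀.map N.subtype⁆ : Subgroup T)).subgroupOf G).Normal := by
        constructor
        intro n hn g
        rw [Subgroup.mem_subgroupOf] at hn ⊢
        simp only [Subgroup.coe_mul, Subgroup.coe_inv]
        exact aux_conj_commutator_mem (hGH g.2) hn
      have hSD := hmono _ (le_sup_left.trans hDS.le) hD hDnorm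
      rw [← hDS]
      exact (sup_eq_left.mpr hSD).symm
end

section
/- Let T be a group and G ≤ T. If G admits a nontrivial characteristic perfect subgroup K, then G is integrable within T if and only if G/K is integrable within N_T(K)/K. -/
open Subgroup

/-- Conjugation by a normalizer element preserves a characteristic subgroup. -/
lemma aux_conj_mem {T : Type*} [Group T] (G K : Subgroup T) (hKG : K ≤ G)
    (hchar : (K.subgroupOf G).Characteristic) {n : T} (hn : n ∈ Subgroup.normalizer (G : Set T)) :
    ∀ g ∈ K, n * g * n⁻¹ ∈ K := by
  intro g hg
  have hmem : ∀ x : G, n * (x : T) * n⁻¹ ∈ G := fun x =>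
    (Subgroup.mem_normalizer_iff.mp hn x).mp x.2
  have hmem' : ∀ x : G, n⁻¹ * (x : T) * n ∈ G := by
    intro x
    have := (Subgroup.mem_normalizer_iff.mp ((Subgroup.normalizer (G : Set T)).inv_mem hn) x).mp x.2
    simpa using this
  let φ : G ≃* G :=
    { toFun := fun x => ⟨n * x * n⁻¹, hmem x⟩
      invFun := fun x => ⟨n⁻¹ * x * n, hmem' x⟩
      left_inv := fun x => by ext; simp; group
      right_inv := fun x => by ext; simp; group
      map_mul' := fun x y => by ext; simp [mul_assoc] }
  have := Subgroup.characteristic_iff_le_comap.mp hchar φ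
  have h2 : φ ⟨g, hKG hg⟩ ∈ K.subgroupOf G := this (by simpa [mem_subgroupOf] using hg)
  simpa [φ, mem_subgroupOf] using h2

lemma aux_norm {T : Type*} [Group T] (G K : Subgroup T) (hKG : K ≤ G)
    (hchar : (K.subgroupOf G).Characteristic) {n : T} (hn : n ∈ Subgroup.normalizer (G : Set T)) :
    n ∈ Subgroup.normalizer (K : Set T) := by
  rw [mem_normalizer_iff]
  intro g
  constructor
  · exact fun hg => aux_conj_mem G K hKG hchar hn g hg
  · intro hg
    have := aux_conj_mem G K hKG hchar ((Subgroup.normalizer (G : Set T)).inv_mem hn) _ hg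
    simpa [mul_assoc] using this

/-- Commutator commutes with `subgroupOf` for subgroups contained in the ambient one. -/
lemma aux_commutator_subgroupOf {T : Type*} [Group T] {A B C : Subgroup T}
    (hA : A ≤ C) (hB : B ≤ C) :
    ⁅A.subgroupOf C, B.subgroupOf C⁆ = ⁅A, B⁆.subgroupOf C := by
  have hAB : ⁅A, B⁆ ≤ C := by
    rw [commutator_le]
    intro g₁ h₁ g₂ h₂
    exact C.mul_mem (C.mul_mem (C.mul_mem (hA h₁) (hB h₂)) (C.inv_mem (hA h₁)))
      (C.inv_mem (hB h₂))
  apply Subgroup.map_injective C.subtype_injective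
  rw [Subgroup.map_commutator, subgroupOf_map_subtype, subgroupOf_map_subtype,
    subgroupOf_map_subtype, inf_eq_left.mpr hA, inf_eq_left.mpr hB, inf_eq_left.mpr hAB]

/-- Lemma 2.2(2): If `G ≤ T` admits a nontrivial characteristic perfect subgroup `K`,
then `G` is integrable within `T` iff `G/K` is integrable within `N_T(K)/K`. -/
theorem stmt1 {T : Type*} [Group T] (G K : Subgroup T) (hKG : K ≤ G)
    (hKbot : K ≠ ⊥) (hchar : (K.subgroupOf G).Characteristic)
    (hperf : ⁅K, K⁆ = K) :
    (∃ H : Subgroup T, ⁅H, H⁆ = G) ↔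
      (∃ Q : Subgroup ((Subgroup.normalizer (K : Set T)) ⧸ K.subgroupOf (Subgroup.normalizer (K : Set T))),
        ⁅Q, Q⁆ = (G.subgroupOf (Subgroup.normalizer (K : Set T))).map
          (QuotientGroup.mk' (K.subgroupOf (Subgroup.normalizer (K : Set T))))) := by
  haveI := hchar
  set N := Subgroup.normalizer (K : Set T) with hN
  set mk := QuotientGroup.mk' (K.subgroupOf N) with hmk
  have hGN : G ≤ N := Subgroup.le_normalizer_of_normal_subgroupOf hKG
  constructor
  · rintro ⟨H, hH⟩
    have hGH : G ≤ H := by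
      rw [← hH, commutator_le]
      intro g₁ h₁ g₂ h₂
      exact H.mul_mem (H.mul_mem (H.mul_mem h₁ h₂) (H.inv_mem h₁)) (H.inv_mem h₂)
    -- G.subgroupOf H is normal in H
    have hGnorm : (G.subgroupOf H).Normal := by
      have : G.subgroupOf H = ⁅(⊤ : Subgroup H), (⊤ : Subgroup H)⁆ := by
        rw [← hH, ← aux_commutator_subgroupOf (le_refl H) (le_refl H),
          Subgroup.subgroupOf_self]
      rw [this]; infer_instance
    have hHGn : H ≤ Subgroup.normalizer (G : Set T) := Subgroup.le_normalizer_of_normal_subgroupOf hGH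
    have hHN : H ≤ N := fun n hn => aux_norm G K hKG hchar (hHGn hn)
    refine ⟨(H.subgroupOf N).map mk, ?_⟩
    rw [← Subgroup.map_commutator, aux_commutator_subgroupOf hHN hHN, hH]
  · rintro ⟨Q, hQ⟩
    have hker : mk.ker = K.subgroupOf N := QuotientGroup.ker_mk' _
    set H₀ := Q.comap mk with hH₀
    have hK0 : K.subgroupOf N ≤ H₀ := by
      rw [← hker]; intro x hx
      simp only [hH₀, Subgroup.mem_comap]
      rw [MonoidHom.mem_ker] at hx
      rw [hx]; exact Q.one_mem
    have hKK : ⁅K.subgroupOf N, K.subgroupOf N⁆ = K.subgroupOf N := by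
      rw [aux_commutator_subgroupOf Subgroup.le_normalizer Subgroup.le_normalizer, hperf]
    have hKcomm : K.subgroupOf N ≤ ⁅H₀, H₀⁆ := by
      rw [← hKK]; exact Subgroup.commutator_mono hK0 hK0
    have hmapeq : (⁅H₀, H₀⁆).map mk = (G.subgroupOf N).map mk := by
      rw [Subgroup.map_commutator,
        Subgroup.map_comap_eq_self_of_surjective (QuotientGroup.mk'_surjective _), ← hQ]
    have hcomm : ⁅H₀, H₀⁆ = G.subgroupOf N := by
      have h1 := Subgroup.comap_map_eq_self (f := mk) (H := ⁅H₀, H₀⁆) (by rw [hker]; exact hKcomm)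
      have h2 := Subgroup.comap_map_eq_self (f := mk) (H := G.subgroupOf N)
        (by rw [hker]; exact fun x hx => hKG hx)
      rw [← h1, hmapeq, h2]
    refine ⟨H₀.map N.subtype, ?_⟩
    rw [← Subgroup.map_commutator, hcomm, subgroupOf_map_subtype, inf_eq_left.mpr hGN]
end

section
/- Let A = ⟨x, y⟩ be a metacyclic group with ⟨x⟩ normal in A. Then a subgroup B ≤ A is integrable within A (i.e., B = C' for some C ≤ A) if and only if B ≤ A'. -/
section Aux

open scoped commutatorElement

variable {A : Type*} [Group A]

private lemma conj_zpow' (c m : A) (k : ℤ) : c * m ^ k * c⁻¹ = (c * m * c⁻¹) ^ k := by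
  have := map_zpow (MulAut.conj c) m k
  simp only [MulAut.conj_apply] at this
  exact this


private lemma conj_zpowers_mem {c d m : A} (h : c * d * c⁻¹ ∈ Subgroup.zpowers d)
    (hm : m ∈ Subgroup.zpowers d) : c * m * c⁻¹ ∈ Subgroup.zpowers d := by
  obtain ⟨k, hk⟩ := hm
  have hk2 : d ^ k = m := hk
  obtain ⟨j, hj⟩ := h
  have hj2 : d ^ j = c * d * c⁻¹ := hj
  rw [← hk2, conj_zpow', ← hj2, ← zpow_mul]
  exact Subgroup.zpow_mem _ (Subgroup.mem_zpowers d) _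

/-- Key computation: if `⟨a⟩` is normalized by `y` with explicit exponents, then the derived
subgroup of `⟨a, y⟩` is `⟨a^(r-1)⟩`. -/
private lemma key (a y : A) (r r' : ℤ)
    (h1 : y⁻¹ * a * y = a ^ r) (h2 : y * a * y⁻¹ = a ^ r') :
    ⁅Subgroup.closure {a, y}, Subgroup.closure {a, y}⁆ = Subgroup.zpowers (a ^ (r - 1)) := by
  set C : Subgroup A := Subgroup.closure {a, y} with hC
  set d : A := a ^ (r - 1) with hd
  set M : Subgroup A := Subgroup.zpowers d with hM
  have haC : a ∈ C := Subgroup.subset_closure (by simp)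
  have hyC : y ∈ C := Subgroup.subset_closure (by simp)
  have hcz : ∀ (c : A) (k : ℤ), c⁻¹ * a ^ k * c = (c⁻¹ * a * c) ^ k := by
    intro c k
    simpa using conj_zpow' c⁻¹ a k
  -- a ^ (r' * r) = a
  have hE : a ^ (r' * r) = a := by
    have h3 : y * (y⁻¹ * a * y) * y⁻¹ = y * a ^ r * y⁻¹ := by rw [h1]
    have h4 : y * (y⁻¹ * a * y) * y⁻¹ = a := by group
    rw [h4, conj_zpow', h2, ← zpow_mul] at h3
    exact h3.symm
  have hd1 : a ^ ((r - 1) * r') = a ^ (1 - r') := by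
    have he : (r - 1) * r' = r' * r + -r' := by ring
    rw [he, zpow_add, hE, show (1 : ℤ) - r' = 1 + -r' by ring, zpow_add, zpow_one]
  -- conjugation of d by generators
  have hca : Commute a d := (Commute.refl a).zpow_right (r - 1)
  have hda : a * d * a⁻¹ = d := by rw [hca.eq]; group
  have hda' : a⁻¹ * d * a = d := by rw [hca.inv_left.eq]; group
  have hyd : y * d * y⁻¹ = d ^ r' := by
    rw [hd, conj_zpow', h2, ← zpow_mul, ← zpow_mul]
    congr 1; ring
  have hy'd : y⁻¹ * d * y = d ^ r := by
    rw [hd, hcz, h1, ← zpow_mul, ← zpow_mul]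
    congr 1; ring
  -- every element of C conjugates M into M
  have hconj : ∀ c ∈ C, ∀ m ∈ M, c * m * c⁻¹ ∈ M := by
    have base : ∀ c ∈ C, c * d * c⁻¹ ∈ M ∧ c⁻¹ * d * c ∈ M := by
      intro c hc
      induction hc using Subgroup.closure_induction with
      | mem z hz =>
        rcases hz with h | h
        · subst h
          constructor
          · rw [hda]; exact Subgroup.mem_zpowers d
          · rw [hda']; exact Subgroup.mem_zpowers d
        · subst h
          constructor
          · rw [hyd]; exact Subgroup.zpow_mem _ (Subgroup.mem_zpowers d) r'
          · rw [hy'd]; exact Subgroup.zpow_mem _ (Subgroup.mem_zpowers d) r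
      | one =>
        constructor <;> · simp only [one_mul, inv_one, mul_one]; exact Subgroup.mem_zpowers d
      | mul u v hu hv ihu ihv =>
        obtain ⟨hu1, hu2⟩ := ihu
        obtain ⟨hv1, hv2⟩ := ihv
        constructor
        · have he : (u * v) * d * (u * v)⁻¹ = u * (v * d * v⁻¹) * u⁻¹ := by group
          rw [he]
          exact conj_zpowers_mem hu1 hv1
        · have he : (u * v)⁻¹ * d * (u * v) = v⁻¹ * (u⁻¹ * d * u) * v⁻¹⁻¹ := by group
          rw [he]
          exact conj_zpowers_mem (by rw [inv_inv]; exact hv2) hu2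
      | inv u hu ihu =>
        obtain ⟨hu1, hu2⟩ := ihu
        exact ⟨by simpa using hu2, by simpa using hu1⟩
    intro c hc m hm
    exact conj_zpowers_mem (base c hc).1 hm
  -- commutators of the generators land in M
  have hay : ⁅a, y⁆ ∈ M := by
    have h2' : y * a⁻¹ * y⁻¹ = a ^ (-r') := by
      rw [show y * a⁻¹ * y⁻¹ = (y * a * y⁻¹)⁻¹ by group, h2, ← zpow_neg]
    have he : ⁅a, y⁆ = a ^ (1 - r') := by
      rw [commutatorElement_def, show a * y * a⁻¹ * y⁻¹ = a * (y * a⁻¹ * y⁻¹) by group,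
        h2', sub_eq_add_neg, zpow_add, zpow_one]
    refine ⟨r', ?_⟩
    show d ^ r' = ⁅a, y⁆
    rw [hd, ← zpow_mul, hd1, he]
  have hya : ⁅y, a⁆ ∈ M := by
    rw [show ⁅y, a⁆ = ⁅a, y⁆⁻¹ from (commutatorElement_inv a y).symm]
    exact inv_mem hay
  -- inner induction
  have inner : ∀ g : A, ⁅g, a⁆ ∈ M → ⁅g, y⁆ ∈ M → ∀ h ∈ C, ⁅g, h⁆ ∈ M := by
    intro g hga hgy h hh
    induction hh using Subgroup.closure_induction with
    | mem z hz => rcases hz with h | h <;> subst h <;> assumption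
    | one => rw [commutatorElement_one_right]; exact one_mem M
    | mul u v hu hv ihu ihv =>
      have he : ⁅g, u * v⁆ = ⁅g, u⁆ * (u * ⁅g, v⁆ * u⁻¹) := by
        simp only [commutatorElement_def]; group
      rw [he]
      exact mul_mem ihu (hconj u hu _ ihv)
    | inv u hu ihu =>
      have he : ⁅g, u⁻¹⁆ = u⁻¹ * ⁅g, u⁆⁻¹ * u := by
        simp only [commutatorElement_def]; group
      rw [he, show u⁻¹ * ⁅g, u⁆⁻¹ * u = u⁻¹ * ⁅g, u⁆⁻¹ * u⁻¹⁻¹ by group]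
      exact hconj u⁻¹ (inv_mem hu) _ (inv_mem ihu)
  -- outer induction
  have outer : ∀ g ∈ C, ∀ h ∈ C, ⁅g, h⁆ ∈ M := by
    intro g hg
    induction hg using Subgroup.closure_induction with
    | mem z hz =>
      rcases hz with h | h
      · subst h
        exact inner z (by rw [commutatorElement_self]; exact one_mem M) hay
      · subst h
        exact inner z hya (by rw [commutatorElement_self]; exact one_mem M)
    | one =>
      intro h hh
      rw [commutatorElement_one_left]; exact one_mem M
    | mul u v hu hv ihu ihv =>
      intro h hh
      have he : ⁅u * v, h⁆ = (u * ⁅v, h⁆ * u⁻¹) * ⁅u, h⁆ := by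
        simp only [commutatorElement_def]; group
      rw [he]
      exact mul_mem (hconj u hu _ (ihv h hh)) (ihu h hh)
    | inv u hu ihu =>
      intro h hh
      have he : ⁅u⁻¹, h⁆ = u⁻¹ * ⁅u, h⁆⁻¹ * u := by
        simp only [commutatorElement_def]; group
      rw [he, show u⁻¹ * ⁅u, h⁆⁻¹ * u = u⁻¹ * ⁅u, h⁆⁻¹ * u⁻¹⁻¹ by group]
      exact hconj u⁻¹ (inv_mem hu) _ (inv_mem (ihu h hh))
  refine le_antisymm (Subgroup.commutator_le.mpr outer) ?_
  have hdmem : d ∈ ⁅C, C⁆ := by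
    have he : ⁅a⁻¹, y⁻¹⁆ = d := by
      rw [show ⁅a⁻¹, y⁻¹⁆ = a⁻¹ * (y⁻¹ * a * y) by rw [commutatorElement_def]; group,
        h1, hd, show a⁻¹ * a ^ r = a ^ (-1 : ℤ) * a ^ r by rw [zpow_neg_one], ← zpow_add]
      congr 1; ring
    rw [← he]
    exact Subgroup.commutator_mem_commutator (inv_mem haC) (inv_mem hyC)
  rw [hM]
  exact (Subgroup.zpowers_le).mpr hdmem

/-- A subgroup contained in a cyclic subgroup is the cyclic subgroup on a power. -/
private lemma sub_of_zpowers (g : A) (B : Subgroup A) (hB : B ≤ Subgroup.zpowers g) :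
    ∃ m : ℤ, B = Subgroup.zpowers (g ^ m) := by
  haveI : IsCyclic (Subgroup.zpowers g) := ⟨⟨⟨g, Subgroup.mem_zpowers g⟩, fun z => by
    obtain ⟨k, hk⟩ := z.2
    exact ⟨k, Subtype.ext (by simpa using hk)⟩⟩⟩
  obtain ⟨b, hbgen⟩ :=
    (Subgroup.isCyclic (B.subgroupOf (Subgroup.zpowers g))).exists_generator
  set c : A := ((b : ↥(Subgroup.zpowers g)) : A) with hc
  obtain ⟨m, hm⟩ := (b : ↥(Subgroup.zpowers g)).2
  have hm2 : g ^ m = c := hm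
  have hcB : c ∈ B := Subgroup.mem_subgroupOf.mp b.2
  refine ⟨m, ?_⟩
  have hBc : B = Subgroup.zpowers c := by
    ext z
    constructor
    · intro hz
      obtain ⟨k, hk⟩ := hbgen ⟨⟨z, hB hz⟩, Subgroup.mem_subgroupOf.mpr hz⟩
      refine ⟨k, ?_⟩
      have h3 := congrArg
        (fun w : ↥(B.subgroupOf (Subgroup.zpowers g)) => ((w : ↥(Subgroup.zpowers g)) : A)) hk
      simpa using h3
    · rintro ⟨k, hk⟩
      have hk2 : c ^ k = z := hk
      rw [← hk2]
      exact Subgroup.zpow_mem _ hcB k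
  rw [hBc, hm2]

end Aux

/-- Lemma 2.3: Let `A = ⟨x, y⟩` be metacyclic with `⟨x⟩` normal in `A`.  A subgroup
`B ≤ A` is integrable within `A` iff `B ≤ A'`. -/
theorem stmt2 {A : Type*} [Group A] (x y : A)
    (hgen : Subgroup.closure {x, y} = ⊤)
    (hnorm : (Subgroup.zpowers x).Normal) (B : Subgroup A) :
    (∃ C : Subgroup A, ⁅C, C⁆ = B) ↔ B ≤ commutator A := by
  constructor
  · rintro ⟨C, rfl⟩
    rw [commutator_def]
    exact Subgroup.commutator_mono le_top le_top
  · intro hB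
    -- get conjugation exponents
    obtain ⟨r, hr⟩ : ∃ r : ℤ, y⁻¹ * x * y = x ^ r := by
      have := hnorm.conj_mem x (Subgroup.mem_zpowers x) y⁻¹
      simp only [inv_inv] at this
      obtain ⟨r, hr⟩ := this
      exact ⟨r, hr.symm⟩
    obtain ⟨r', hr'⟩ : ∃ r' : ℤ, y * x * y⁻¹ = x ^ r' := by
      have := hnorm.conj_mem x (Subgroup.mem_zpowers x) y
      obtain ⟨r', hr'⟩ := this
      exact ⟨r', hr'.symm⟩
    have hcomm : commutator A = Subgroup.zpowers (x ^ (r - 1)) := by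
      rw [commutator_def, ← hgen, key x y r r' hr hr']
    rw [hcomm] at hB
    obtain ⟨m, hm⟩ := sub_of_zpowers (x ^ (r - 1)) B hB
    refine ⟨Subgroup.closure {x ^ m, y}, ?_⟩
    have h1 : y⁻¹ * x ^ m * y = (x ^ m) ^ r := by
      rw [show y⁻¹ * x ^ m * y = y⁻¹ * x ^ m * y⁻¹⁻¹ by group, conj_zpow',
        show y⁻¹ * x * y⁻¹⁻¹ = y⁻¹ * x * y by group, hr, ← zpow_mul, ← zpow_mul, mul_comm]
    have h2 : y * x ^ m * y⁻¹ = (x ^ m) ^ r' := by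
      rw [conj_zpow', hr', ← zpow_mul, ← zpow_mul, mul_comm]
    rw [key (x ^ m) y r r' h1 h2, hm, ← zpow_mul, ← zpow_mul, mul_comm]
end

section
/- Let A = ⟨x, y⟩ with ⟨x⟩ normal in A, and suppose [x, y] = x^c. Then the derived subgroup A' equals ⟨x^c⟩. -/
open scoped commutatorElement

/-- Let `A = ⟨x, y⟩` with `⟨x⟩` normal in `A` and `[x,y] = x^c`.  Then `A' = ⟨x^c⟩`. -/
theorem stmt3 {A : Type*} [Group A] (x y : A)
    (hgen : Subgroup.closure {x, y} = ⊤)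
    (hnorm : (Subgroup.zpowers x).Normal) (c : ℤ)
    (hc : ⁅x, y⁆ = x ^ c) :
    commutator A = Subgroup.zpowers (x ^ c) := by
  set N := Subgroup.zpowers (x ^ c) with hN
  have hNnormal : N.Normal := by
    constructor
    intro n hn g
    obtain ⟨k, hk⟩ := hn
    obtain ⟨m, hm⟩ := hnorm.conj_mem x (Subgroup.mem_zpowers x) g
    have hconj : g * (x ^ c) * g⁻¹ = (x ^ c) ^ m := by
      have : g * (x ^ c) * g⁻¹ = (g * x * g⁻¹) ^ c := by
        simp [conj_zpow]
      rw [this, ← hm, ← zpow_mul, ← zpow_mul, mul_comm]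
    have : g * n * g⁻¹ = ((x ^ c) ^ m) ^ k := by
      rw [← hk, ← hconj]
      simp [conj_zpow]
    rw [this]
    exact Subgroup.zpow_mem _ (Subgroup.zpow_mem _ (Subgroup.mem_zpowers _) m) k
  have hxc_mem : x ^ c ∈ N := Subgroup.mem_zpowers _
  -- work in the quotient
  let Q := A ⧸ N
  let f : A →* Q := QuotientGroup.mk' N
  have hcomm_xy : Commute (f x) (f y) := by
    have : f (⁅x, y⁆) = 1 := by
      rw [hc]
      exact (QuotientGroup.eq_one_iff _).2 hxc_mem
    have : ⁅f x, f y⁆ = 1 := by rw [← map_commutatorElement]; exact this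
    exact commutatorElement_eq_one_iff_commute.mp this
  have hgenQ : Subgroup.closure {f x, f y} = ⊤ := by
    have : Subgroup.closure (f '' {x, y}) = ⊤ := by
      rw [← MonoidHom.map_closure, hgen, ← MonoidHom.range_eq_map,
        MonoidHom.range_eq_top_of_surjective f (QuotientGroup.mk'_surjective N)]
    simpa [Set.image_insert_eq] using this
  have hallcomm : ∀ a b : Q, Commute a b := by
    have key : ∀ a ∈ Subgroup.closure ({f x, f y} : Set Q),
        ∀ b ∈ Subgroup.closure ({f x, f y} : Set Q), Commute a b := by
      intro a ha b hb
      induction ha using Subgroup.closure_induction with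
      | mem a ha =>
        induction hb using Subgroup.closure_induction with
        | mem b hb =>
          rcases ha with rfl | rfl <;> rcases hb with rfl | rfl
          · exact Commute.refl _
          · exact hcomm_xy
          · exact hcomm_xy.symm
          · exact Commute.refl _
        | one => exact Commute.one_right _
        | mul b₁ b₂ _ _ h1 h2 => exact h1.mul_right h2
        | inv b _ h => exact h.inv_right
      | one => exact Commute.one_left _
      | mul a₁ a₂ _ _ h1 h2 => exact h1.mul_left h2
      | inv a _ h => exact h.inv_left
    intro a b
    exact key a (by rw [hgenQ]; trivial) b (by rw [hgenQ]; trivial)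
  apply le_antisymm
  · rw [commutator_def]
    rw [Subgroup.commutator_le]
    intro g _ h _
    have h1 : f ⁅g, h⁆ = 1 := by
      rw [map_commutatorElement]
      exact commutatorElement_eq_one_iff_commute.mpr (hallcomm (f g) (f h))
    exact (QuotientGroup.eq_one_iff _).mp h1
  · exact Subgroup.zpowers_le.mpr
      (by rw [← hc]; exact Subgroup.commutator_mem_commutator (Subgroup.mem_top x) (Subgroup.mem_top y))
end

section
/- The dihedral group D₈ of order 8 is not isomorphic to the derived subgroup of any group; that is, D₈ is not integrable. -/
private lemma conj_inv_aux {G : Type*} [Group G] {a x v : G} (h : a * x * a⁻¹ = v) :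
    a * x⁻¹ * a⁻¹ = v⁻¹ := by rw [← h]; group

private lemma conj_back_aux {G : Type*} [Group G] {a x v : G} (h : a * x * a⁻¹ = v) :
    a⁻¹ * v * a = x := by rw [← h]; group

open scoped commutatorElement

/-- The dihedral group of order `8` is not integrable: it is not isomorphic to the
derived subgroup of any group. -/
theorem stmt5 : ∀ (H : Type*) [Group H],
    ¬ Nonempty ((commutator H) ≃* DihedralGroup 4) := by
  intro H _ hne
  obtain ⟨e⟩ := hne
  set R : commutator H := e.symm (DihedralGroup.r 1) with hRdef
  set r : H := (R : H) with hrdef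
  have heR : e R = DihedralGroup.r 1 := by rw [hRdef, MulEquiv.apply_symm_apply]
  have hr2 : r ^ 2 ≠ 1 := by
    intro h
    have hR2 : R ^ 2 = 1 := by
      apply Subtype.ext
      push_cast
      exact h
    have h2 := congrArg e hR2
    rw [map_pow, map_one, heR] at h2
    revert h2
    decide
  have hr4 : r ^ 4 = 1 := by
    have hR4 : R ^ 4 = 1 := by
      apply e.injective
      rw [map_pow, map_one, heR]
      decide
    have := congrArg (Subtype.val) hR4
    push_cast at this
    exact this
  have d8 : ∀ x : DihedralGroup 4, x ^ 4 = 1 → x ^ 2 ≠ 1 →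
      x = DihedralGroup.r 1 ∨ x = DihedralGroup.r 3 := by decide
  haveI : (commutator H).Normal := Subgroup.commutator_normal ⊤ ⊤
  have key : ∀ g : H, g * r * g⁻¹ = r ∨ g * r * g⁻¹ = r⁻¹ := by
    intro g
    have hmem : g * r * g⁻¹ ∈ commutator H :=
      Subgroup.Normal.conj_mem inferInstance r R.2 g
    set T : commutator H := ⟨g * r * g⁻¹, hmem⟩ with hTdef
    have hT4 : (e T) ^ 4 = 1 := by
      rw [← map_pow, ← map_one e]
      congr 1
      apply Subtype.ext
      push_cast [hTdef]
      rw [conj_pow, hr4, mul_one, mul_inv_cancel]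
    have hT2 : (e T) ^ 2 ≠ 1 := by
      intro h
      apply hr2
      have hT2' : T ^ 2 = 1 := e.injective (by rw [map_pow, h, map_one])
      have hc := congrArg Subtype.val hT2'
      push_cast [hTdef] at hc
      have h2 : g * r ^ 2 * g⁻¹ = 1 := by
        rw [← conj_pow]; exact hc
      have h3 : r ^ 2 = g⁻¹ * (g * r ^ 2 * g⁻¹) * g := by group
      rw [h2] at h3
      simpa using h3
    rcases d8 (e T) hT4 hT2 with h | h
    · left
      have hTR : T = R := by
        rw [hRdef, ← h, MulEquiv.symm_apply_apply]
      exact congrArg Subtype.val hTR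
    · right
      have h3 : e T = (DihedralGroup.r 1)⁻¹ := by rw [h]; decide
      have hTR : T = R⁻¹ := by
        rw [hRdef, ← map_inv, ← h3, MulEquiv.symm_apply_apply]
      have := congrArg Subtype.val hTR
      push_cast at this
      exact this
  have pack : ∀ g : H,
      (g * r * g⁻¹ = r ∧ g⁻¹ * r * g = r ∧ g * r⁻¹ * g⁻¹ = r⁻¹ ∧ g⁻¹ * r⁻¹ * g = r⁻¹) ∨
      (g * r * g⁻¹ = r⁻¹ ∧ g⁻¹ * r * g = r⁻¹ ∧ g * r⁻¹ * g⁻¹ = r ∧ g⁻¹ * r⁻¹ * g = r) := by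
    intro g
    rcases key g with h | h
    · left
      have h2 : g⁻¹ * r * g = r := conj_back_aux h
      have h2' : g⁻¹ * r * (g⁻¹)⁻¹ = r := by rwa [inv_inv]
      have h4 := conj_inv_aux h2'
      rw [inv_inv] at h4
      exact ⟨h, h2, conj_inv_aux h, h4⟩
    · right
      have h4 : g⁻¹ * r⁻¹ * g = r := conj_back_aux h
      have h3 := conj_inv_aux h
      rw [inv_inv] at h3
      have h4' : g⁻¹ * r⁻¹ * (g⁻¹)⁻¹ = r := by rwa [inv_inv]
      have h2 := conj_inv_aux h4'
      rw [inv_inv, inv_inv] at h2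
      exact ⟨h, h2, h3, h4⟩
  have comm : ∀ a b : H, ⁅a, b⁆ * r = r * ⁅a, b⁆ := by
    intro a b
    have e0 : ⁅a, b⁆ * r * ⁅a, b⁆⁻¹ = a * (b * (a⁻¹ * (b⁻¹ * r * b) * a) * b⁻¹) * a⁻¹ := by
      rw [commutatorElement_def]; group
    have hconj : ⁅a, b⁆ * r * ⁅a, b⁆⁻¹ = r := by
      rcases pack a with ⟨ha1, ha2, ha3, ha4⟩ | ⟨ha1, ha2, ha3, ha4⟩ <;>
        rcases pack b with ⟨hb1, hb2, hb3, hb4⟩ | ⟨hb1, hb2, hb3, hb4⟩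
      · rw [e0, hb2, ha2, hb1, ha1]
      · rw [e0, hb2, ha4, hb3, ha1]
      · rw [e0, hb2, ha2, hb3, ha3]
      · rw [e0, hb2, ha4, hb1, ha3]
    exact mul_inv_eq_iff_eq_mul.mp hconj
  have hle : commutator H ≤ Subgroup.centralizer {r} := by
    rw [commutator_def, Subgroup.commutator_le]
    intro g1 _ g2 _
    rw [Subgroup.mem_centralizer_iff]
    rintro x hx
    rw [Set.mem_singleton_iff] at hx
    subst hx
    exact (comm g1 g2).symm
  set S : commutator H := e.symm (DihedralGroup.sr 0) with hSdef
  have hSmem : (S : H) ∈ Subgroup.centralizer {r} := hle S.2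
  rw [Subgroup.mem_centralizer_iff] at hSmem
  have hsr : r * (S : H) = (S : H) * r := hSmem r rfl
  have h1 : R * S = S * R := Subtype.ext hsr
  have h2 := congrArg e h1
  rw [map_mul, map_mul, heR, hSdef, MulEquiv.apply_symm_apply] at h2
  revert h2
  decide
end

section
/- Let S be a nonabelian simple group and G with Inn(S) ≤ G ≤ Aut(S), identifying S with Inn(S). Then G is integrable within Aut(S) if and only if G/S is integrable within Out(S) = Aut(S)/Inn(S). -/
/-- Inner automorphisms form a normal subgroup of `Aut(S)`. -/
instance innRange_normal {S : Type*} [Group S] :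
    ((MulAut.conj : S →* MulAut S).range).Normal := by
  constructor
  rintro _ ⟨x, rfl⟩ g
  refine ⟨g x, ?_⟩
  ext s
  simp [mul_assoc]

/-- Lemma 3.2: for `Inn(S) ≤ G ≤ Aut(S)` with `S` nonabelian simple (identifying `S`
with `Inn(S)`), `G` is integrable within `Aut(S)` iff `G/S` is integrable within
`Out(S) = Aut(S)/Inn(S)`. -/
theorem stmt8 {S : Type*} [Group S] [IsSimpleGroup S]
    (hna : ¬ ∀ a b : S, a * b = b * a)
    (G : Subgroup (MulAut S))
    (hG : (MulAut.conj : S →* MulAut S).range ≤ G) :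
    (∃ H : Subgroup (MulAut S), ⁅H, H⁆ = G) ↔
      (∃ K : Subgroup (MulAut S ⧸ (MulAut.conj : S →* MulAut S).range),
        ⁅K, K⁆ = G.map (QuotientGroup.mk' (MulAut.conj : S →* MulAut S).range)) := by
  set Inn := (MulAut.conj : S →* MulAut S).range with hInn
  set π := QuotientGroup.mk' Inn with hπ
  have hπsurj : Function.Surjective π := QuotientGroup.mk'_surjective Inn
  have hker : π.ker = Inn := QuotientGroup.ker_mk' Inn
  -- S is perfect
  have hperf : (⊤ : Subgroup S) = ⁅(⊤ : Subgroup S), (⊤ : Subgroup S)⁆ := by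
    rcases (Subgroup.commutator_normal (⊤ : Subgroup S) ⊤).eq_bot_or_eq_top with h | h
    · exfalso
      apply hna
      intro a b
      have : (open scoped commutatorElement in ⁅a, b⁆) ∈ (⊥ : Subgroup S) := by
        rw [← h]
        exact Subgroup.commutator_mem_commutator (Subgroup.mem_top a) (Subgroup.mem_top b)
      rw [Subgroup.mem_bot] at this
      exact commutatorElement_eq_one_iff_mul_comm.mp this
    · exact h.symm
  -- Inn is perfect
  have hInnperf : Inn = ⁅Inn, Inn⁆ := by
    have h1 : Inn = Subgroup.map (MulAut.conj : S →* MulAut S) ⊤ :=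
      (MulAut.conj : S →* MulAut S).range_eq_map
    rw [h1]
    nth_rewrite 1 [hperf]
    rw [Subgroup.map_commutator]
  constructor
  · rintro ⟨H, rfl⟩
    exact ⟨H.map π, by rw [← Subgroup.map_commutator]⟩
  · rintro ⟨K, hK⟩
    refine ⟨K.comap π, ?_⟩
    have hmap : (⁅K.comap π, K.comap π⁆).map π = G.map π := by
      rw [Subgroup.map_commutator, Subgroup.map_comap_eq_self_of_surjective hπsurj, hK]
    have h1 := congrArg (Subgroup.comap π) hmap
    rw [Subgroup.comap_map_eq, Subgroup.comap_map_eq, hker] at h1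
    have hle0 : Inn ≤ K.comap π := le_trans (le_of_eq hker.symm) (Subgroup.ker_le_comap _ _)
    have hle1 : Inn ≤ ⁅K.comap π, K.comap π⁆ :=
      hInnperf.le.trans (Subgroup.commutator_mono hle0 hle0)
    rw [sup_eq_left.mpr hle1, sup_eq_left.mpr hG] at h1
    exact h1
end

section
/- Let S be a finite nonabelian simple group such that Out(S) is metacyclic (i.e., has a cyclic normal subgroup with cyclic quotient generated by a single coset, so Out(S) = ⟨x,y⟩ with ⟨x⟩ normal). Then a group G with Inn(S) ≤ G ≤ Aut(S) is integrable within Aut(S) if and only if G ≤ Aut(S)'. -/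
/-- Inner automorphisms form a normal subgroup of `Aut(S)`. -/
instance innRange_normal' {S : Type*} [Group S] :
    ((MulAut.conj : S →* MulAut S).range).Normal := by
  constructor
  rintro _ ⟨x, rfl⟩ g
  refine ⟨g x, ?_⟩
  ext s
  simp [mul_assoc]

open scoped commutatorElement

/-- Powers of a normal-generator generate normal subgroups. -/
lemma zpowers_zpow_normal' {Q : Type*} [Group Q] {x : Q}
    (hN : (Subgroup.zpowers x).Normal) (e : ℤ) : (Subgroup.zpowers (x ^ e)).Normal := by
  constructor
  intro n hn g
  obtain ⟨k, rfl⟩ := Subgroup.mem_zpowers_iff.mp hn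
  obtain ⟨r, hr⟩ := Subgroup.mem_zpowers_iff.mp (hN.conj_mem x (Subgroup.mem_zpowers x) g)
  refine Subgroup.mem_zpowers_iff.mpr ⟨r * k, ?_⟩
  have h1 : g * (x ^ e) ^ k * g⁻¹ = (g * x * g⁻¹) ^ (e * k) := by
    rw [conj_zpow, ← zpow_mul]
  rw [h1, ← hr, ← zpow_mul, ← zpow_mul]
  congr 1
  ring

/-- If the commutator of two elements lies in a normal subgroup `E`, then the derived
subgroup of the subgroup they generate lies in `E`. -/
lemma commutator_closure_pair_le' {Q : Type*} [Group Q] (E : Subgroup Q) (hE : E.Normal)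
    {u v : Q} (huv : ⁅u, v⁆ ∈ E) :
    ⁅Subgroup.closure {u, v}, Subgroup.closure {u, v}⁆ ≤ E := by
  haveI := hE
  rw [Subgroup.commutator_le]
  intro g hg h hh
  set f := QuotientGroup.mk' E with hf
  have hcomm : ∀ a ∈ ({f u, f v} : Set (Q ⧸ E)), ∀ b ∈ ({f u, f v} : Set (Q ⧸ E)),
      a * b = b * a := by
    have huv1 : f u * f v = f v * f u := by
      have h1 : ⁅f u, f v⁆ = 1 := by
        rw [← map_commutatorElement]
        exact (QuotientGroup.eq_one_iff _).mpr huv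
      exact commutatorElement_eq_one_iff_mul_comm.mp h1
    rintro a (rfl | rfl) b (rfl | rfl)
    · rfl
    · exact huv1
    · exact huv1.symm
    · rfl
  have h1 : Subgroup.closure {f u, f v} ≤ Subgroup.centralizer {f u, f v} :=
    (Subgroup.closure_le _).mpr fun a ha =>
      Subgroup.mem_centralizer_iff.mpr fun b hb => hcomm b hb a ha
  have h2 := Subgroup.closure_le_centralizer_centralizer ({f u, f v} : Set (Q ⧸ E))
  have hmap : ∀ w : Q, w ∈ Subgroup.closure ({u, v} : Set Q) →
      f w ∈ Subgroup.closure ({f u, f v} : Set (Q ⧸ E)) := by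
    intro w hw
    have : f w ∈ (Subgroup.closure ({u, v} : Set Q)).map f :=
      Subgroup.mem_map_of_mem _ hw
    rwa [MonoidHom.map_closure, Set.image_pair] at this
  have hcom : f h * f g = f g * f h :=
    Subgroup.mem_centralizer_iff.mp (h2 (hmap g hg)) (f h) (h1 (hmap h hh))
  have hone : f ⁅g, h⁆ = 1 := by
    rw [map_commutatorElement]
    exact commutatorElement_eq_one_iff_mul_comm.mpr hcom.symm
  exact (QuotientGroup.eq_one_iff _).mp hone

/-- Any subgroup contained in the cyclic group generated by `z` is generated by a power. -/
lemma exists_eq_zpowers_zpow' {Q : Type*} [Group Q] (z : Q) (K : Subgroup Q)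
    (hK : K ≤ Subgroup.zpowers z) : ∃ t : ℤ, K = Subgroup.zpowers (z ^ t) := by
  haveI : IsCyclic (Subgroup.zpowers z) := by
    refine ⟨⟨⟨z, Subgroup.mem_zpowers z⟩, ?_⟩⟩
    rintro ⟨w, hw⟩
    obtain ⟨k, hk⟩ := Subgroup.mem_zpowers_iff.mp hw
    exact Subgroup.mem_zpowers_iff.mpr ⟨k, Subtype.ext (by simpa using hk)⟩
  haveI : IsCyclic K := Subgroup.isCyclic_of_le hK
  obtain ⟨⟨w, hwK⟩, hgen⟩ := IsCyclic.exists_generator (α := K)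
  obtain ⟨t, ht⟩ := Subgroup.mem_zpowers_iff.mp (hK hwK)
  refine ⟨t, le_antisymm ?_ ?_⟩
  · intro g hg
    obtain ⟨n, hn⟩ := Subgroup.mem_zpowers_iff.mp (hgen ⟨g, hg⟩)
    refine Subgroup.mem_zpowers_iff.mpr ⟨n, ?_⟩
    have := congrArg Subtype.val hn
    simpa [ht] using this
  · exact Subgroup.zpowers_le.mpr (ht ▸ hwK)

/-- If `S` is a finite nonabelian simple group with `Out(S)` metacyclic, then a group
`G` with `Inn(S) ≤ G ≤ Aut(S)` is integrable within `Aut(S)` iff `G ≤ Aut(S)'`. -/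
theorem stmt9 {S : Type*} [Group S] [Finite S] [IsSimpleGroup S]
    (hna : ¬ ∀ a b : S, a * b = b * a)
    (hmeta : ∃ x y : MulAut S ⧸ (MulAut.conj : S →* MulAut S).range,
      Subgroup.closure {x, y} = ⊤ ∧ (Subgroup.zpowers x).Normal)
    (G : Subgroup (MulAut S))
    (hG : (MulAut.conj : S →* MulAut S).range ≤ G) :
    (∃ H : Subgroup (MulAut S), ⁅H, H⁆ = G) ↔ G ≤ commutator (MulAut S) := by
  set Inn := (MulAut.conj : S →* MulAut S).range with hInn
  constructor
  · rintro ⟨H, rfl⟩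
    exact Subgroup.commutator_mono le_top le_top
  · intro hGle
    obtain ⟨x, y, hclos, hNorm⟩ := hmeta
    set π := QuotientGroup.mk' Inn with hπdef
    have hπsurj : Function.Surjective π := QuotientGroup.mk'_surjective Inn
    have hxyN : ⁅x, y⁆ ∈ Subgroup.zpowers x := by
      have h1 : y * x⁻¹ * y⁻¹ ∈ Subgroup.zpowers x :=
        hNorm.conj_mem _ (Subgroup.inv_mem _ (Subgroup.mem_zpowers x)) y
      have h2 : ⁅x, y⁆ = x * (y * x⁻¹ * y⁻¹) := by group
      rw [h2]
      exact Subgroup.mul_mem _ (Subgroup.mem_zpowers x) h1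
    obtain ⟨s, hs⟩ := Subgroup.mem_zpowers_iff.mp hxyN
    have hDnorm : (Subgroup.zpowers ⁅x, y⁆).Normal := by
      rw [← hs]; exact zpowers_zpow_normal' hNorm s
    have hQ'D : commutator (MulAut S ⧸ Inn) ≤ Subgroup.zpowers ⁅x, y⁆ := by
      rw [commutator_def, ← hclos]
      exact commutator_closure_pair_le' _ hDnorm (Subgroup.mem_zpowers _)
    have hmapcomm : Subgroup.map π (commutator (MulAut S)) = commutator (MulAut S ⧸ Inn) := by
      rw [commutator_def, commutator_def, Subgroup.map_commutator,
        Subgroup.map_top_of_surjective π hπsurj]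
    have hKle : Subgroup.map π G ≤ Subgroup.zpowers ⁅x, y⁆ := by
      refine le_trans ?_ hQ'D
      rw [← hmapcomm]
      exact Subgroup.map_mono hGle
    obtain ⟨t, hKt⟩ := exists_eq_zpowers_zpow' _ _ hKle
    have hconj : y * x⁻¹ * y⁻¹ = x ^ (s - 1) := by
      have h1 : x⁻¹ * x ^ s = y * x⁻¹ * y⁻¹ := by rw [hs]; group
      rw [← h1, ← zpow_neg_one, ← zpow_add]
      congr 1
      ring
    have hkey : ⁅x ^ t, y⁆ = ⁅x, y⁆ ^ t := by
      calc ⁅x ^ t, y⁆ = x ^ t * (y * x⁻¹ * y⁻¹) ^ t := by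
            rw [commutatorElement_def, conj_zpow]
            group
        _ = x ^ t * (x ^ (s - 1)) ^ t := by rw [hconj]
        _ = x ^ (s * t) := by rw [← zpow_mul, ← zpow_add]; congr 1; ring
        _ = (x ^ s) ^ t := by rw [← zpow_mul]
        _ = ⁅x, y⁆ ^ t := by rw [hs]
    set Hbar := Subgroup.closure ({x ^ t, y} : Set (MulAut S ⧸ Inn)) with hHbar
    have hEnorm : (Subgroup.zpowers (⁅x, y⁆ ^ t)).Normal := by
      rw [← hs, ← zpow_mul]
      exact zpowers_zpow_normal' hNorm (s * t)
    have hHbar' : ⁅Hbar, Hbar⁆ = Subgroup.zpowers (⁅x, y⁆ ^ t) := by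
      refine le_antisymm ?_ ?_
      · exact commutator_closure_pair_le' _ hEnorm
          (by rw [hkey]; exact Subgroup.mem_zpowers _)
      · refine Subgroup.zpowers_le.mpr ?_
        rw [← hkey]
        exact Subgroup.commutator_mem_commutator
          (Subgroup.subset_closure (Set.mem_insert _ _))
          (Subgroup.subset_closure (Set.mem_insert_of_mem _ rfl))
    set H := Subgroup.comap π Hbar with hH
    refine ⟨H, ?_⟩
    have hcommS : commutator S = ⊤ := by
      rcases IsSimpleGroup.eq_bot_or_eq_top_of_normal (commutator S)
        (Subgroup.commutator_normal ⊤ ⊤) with hbot | htop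
      · exfalso
        apply hna
        intro a b
        have hmem : ⁅a, b⁆ ∈ commutator S :=
          Subgroup.commutator_mem_commutator (Subgroup.mem_top a) (Subgroup.mem_top b)
        rw [hbot, Subgroup.mem_bot] at hmem
        exact commutatorElement_eq_one_iff_mul_comm.mp hmem
      · exact htop
    have hperf : ⁅Inn, Inn⁆ = Inn := by
      rw [hInn, MonoidHom.range_eq_map, ← Subgroup.map_commutator, ← commutator_def, hcommS]
    have hInnH : Inn ≤ H := by
      intro g hg
      have hg1 : π g = 1 := (QuotientGroup.eq_one_iff g).mpr hg
      simp only [hH, Subgroup.mem_comap, hg1]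
      exact Subgroup.one_mem _
    have hkerle : Inn ≤ ⁅H, H⁆ := by
      rw [← hperf]
      exact Subgroup.commutator_mono hInnH hInnH
    have hker : π.ker = Inn := QuotientGroup.ker_mk' Inn
    have hmapeq : Subgroup.map π ⁅H, H⁆ = Subgroup.map π G := by
      rw [Subgroup.map_commutator, hH,
        Subgroup.map_comap_eq_self_of_surjective hπsurj, hHbar', ← hKt]
    calc ⁅H, H⁆ = Subgroup.comap π (Subgroup.map π ⁅H, H⁆) := by
          rw [Subgroup.comap_map_eq, hker, sup_eq_left.mpr hkerle]
      _ = Subgroup.comap π (Subgroup.map π G) := by rw [hmapeq]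
      _ = G := by rw [Subgroup.comap_map_eq, hker, sup_eq_left.mpr hG]
end

section
/- If G is a finite group acting 2-transitively and faithfully on a finite set Ω with |Ω| ≥ 2, then G has a unique minimal normal subgroup. -/
section Aux

variable {G Ω : Type*} [Group G] [Finite G] [Finite Ω] [MulAction G Ω] [FaithfulSMul G Ω]

/-- A nontrivial normal subgroup of a 2-transitive group is transitive. -/
lemma aux17_trans (h2trans : ∀ a b c d : Ω, a ≠ b → c ≠ d →
      ∃ g : G, g • a = c ∧ g • b = d)
    {N : Subgroup G} (hN : N.Normal) (hbot : N ≠ ⊥) (a b : Ω) :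
    ∃ n ∈ N, n • a = b := by
  rcases eq_or_ne a b with rfl | hab
  · exact ⟨1, N.one_mem, one_smul _ _⟩
  obtain ⟨⟨n, hnN⟩, hn1⟩ := Subgroup.ne_bot_iff_exists_ne_one.mp hbot
  have hn1' : n ≠ 1 := by simpa [Subtype.ext_iff] using hn1
  have hx : ∃ x : Ω, n • x ≠ x := by
    by_contra h
    push_neg at h
    exact hn1' (eq_of_smul_eq_smul (M := G) (α := Ω) (fun x => by simpa using h x))
  obtain ⟨x, hxne⟩ := hx
  obtain ⟨g, hg1, hg2⟩ := h2trans x (n • x) a b (Ne.symm hxne) hab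
  refine ⟨g * n * g⁻¹, hN.conj_mem n hnN g, ?_⟩
  have hginv : g⁻¹ • a = x := inv_smul_eq_iff.mpr hg1.symm
  rw [mul_smul, mul_smul, hginv, hg2]

/-- An element centralizing a transitive subgroup and fixing a point is trivial. -/
lemma aux17_free {S : Subgroup G} (hStrans : ∀ a b : Ω, ∃ s ∈ S, s • a = b)
    {m : G} (hm : ∀ s ∈ S, m * s = s * m) {a : Ω} (ha : m • a = a) : m = 1 := by
  apply eq_of_smul_eq_smul (M := G) (α := Ω)
  intro x
  obtain ⟨s, hsS, hs⟩ := hStrans a x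
  calc m • x = m • s • a := by rw [hs]
    _ = (m * s) • a := by rw [mul_smul]
    _ = (s * m) • a := by rw [hm s hsS]
    _ = s • (m • a) := by rw [mul_smul]
    _ = x := by rw [ha, hs]
    _ = (1 : G) • x := (one_smul _ _).symm

/-- Two minimal normal subgroups of a finite 2-transitive faithful group coincide. -/
lemma aux17_unique (hΩ : 2 ≤ Nat.card Ω)
    (h2trans : ∀ a b c d : Ω, a ≠ b → c ≠ d → ∃ g : G, g • a = c ∧ g • b = d)
    {S T : Subgroup G}
    (hSn : S.Normal) (hSb : S ≠ ⊥)
    (hTn : T.Normal) (hTb : T ≠ ⊥)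
    (hTmin : ∀ N : Subgroup G, N.Normal → N ≠ ⊥ → N ≤ T → N = T)
    (hSmin : ∀ N : Subgroup G, N.Normal → N ≠ ⊥ → N ≤ S → N = S) :
    S = T := by
  by_contra hne
  have hΩnt : Nontrivial Ω := Finite.one_lt_card_iff_nontrivial.mp hΩ
  obtain ⟨a⟩ : Nonempty Ω := inferInstance
  -- the intersection is trivial
  have hinf : S ⊓ T = ⊥ := by
    by_contra hI
    have hIn : (S ⊓ T).Normal := by
      constructor
      intro n hn g
      exact ⟨hSn.conj_mem n hn.1 g, hTn.conj_mem n hn.2 g⟩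
    have h1 := hSmin (S ⊓ T) hIn hI inf_le_left
    have h2 := hTmin (S ⊓ T) hIn hI inf_le_right
    exact hne (h1.symm.trans h2)
  have hdis : Disjoint S T := disjoint_iff.mpr hinf
  have hcomm : ∀ x ∈ S, ∀ y ∈ T, x * y = y * x := fun x hx y hy =>
    Subgroup.commute_of_normal_of_disjoint S T hSn hTn hdis x y hx hy
  have hStrans := aux17_trans h2trans hSn hSb
  have hTtrans := aux17_trans h2trans hTn hTb
  -- T acts freely (it centralizes the transitive S)
  have hTfree : ∀ t ∈ T, ∀ x : Ω, t • x = x → t = 1 := by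
    intro t ht x hx
    exact aux17_free (fun u v => aux17_trans h2trans hSn hSb u v)
      (fun s hs => (hcomm s hs t ht).symm) hx
  -- all nontrivial elements of T are conjugate in G
  have hconj : ∀ t ∈ T, t ≠ 1 → ∀ t' ∈ T, t' ≠ 1 → ∃ g : G, g * t * g⁻¹ = t' := by
    intro t ht ht1 t' ht' ht'1
    have hta : t • a ≠ a := fun h => ht1 (hTfree t ht a h)
    have ht'a : t' • a ≠ a := fun h => ht'1 (hTfree t' ht' a h)
    obtain ⟨g, hg1, hg2⟩ := h2trans a (t • a) a (t' • a) (Ne.symm hta) (Ne.symm ht'a)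
    refine ⟨g, ?_⟩
    have hca : (g * t * g⁻¹) • a = t' • a := by
      have hginv : g⁻¹ • a = a := inv_smul_eq_iff.mpr hg1.symm
      rw [mul_smul, mul_smul, hginv, hg2]
    have hfix : (t'⁻¹ * (g * t * g⁻¹)) • a = a := by
      rw [mul_smul, hca, inv_smul_smul]
    have hmem : t'⁻¹ * (g * t * g⁻¹) ∈ T :=
      T.mul_mem (T.inv_mem ht') (hTn.conj_mem t ht g)
    have := hTfree _ hmem a hfix
    have h2 : t' * (t'⁻¹ * (g * t * g⁻¹)) = t' * 1 := by rw [this]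
    rwa [← mul_assoc, mul_inv_cancel, one_mul, mul_one] at h2
  -- all nontrivial elements of T have the same prime order p
  obtain ⟨⟨t₀, ht₀T⟩, ht₀1'⟩ := Subgroup.ne_bot_iff_exists_ne_one.mp hTb
  have ht₀1 : t₀ ≠ 1 := by simpa [Subtype.ext_iff] using ht₀1'
  have hn0 : orderOf t₀ ≠ 0 := (orderOf_pos t₀).ne'
  have hn1 : orderOf t₀ ≠ 1 := fun h => ht₀1 (orderOf_eq_one_iff.mp h)
  obtain ⟨p, hp, hpd⟩ := (orderOf t₀).exists_prime_and_dvd hn1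
  set u := t₀ ^ (orderOf t₀ / p) with hu
  have hupord : orderOf u = p := orderOf_pow_orderOf_div hn0 hpd
  have huT : u ∈ T := T.pow_mem ht₀T _
  have hu1 : u ≠ 1 := by
    intro h
    rw [h, orderOf_one] at hupord
    exact hp.ne_one hupord.symm
  have hordp : ∀ t ∈ T, t ≠ 1 → orderOf t = p := by
    intro t ht ht1
    obtain ⟨g, hg⟩ := hconj u huT hu1 t ht ht1
    have : orderOf ((MulAut.conj g) u) = orderOf u :=
      orderOf_injective (MulAut.conj g).toMonoidHom (MulAut.conj g).injective u
    rw [MulAut.conj_apply] at this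
    rw [← hg, this, hupord]
  -- hence T is a p-group and has nontrivial center
  have hfp : Fact p.Prime := ⟨hp⟩
  have hTnontriv : Nontrivial T := ⟨⟨⟨t₀, ht₀T⟩, 1, ht₀1'⟩⟩
  have hpT : IsPGroup p T := by
    intro t
    by_cases ht1 : (t : G) = 1
    · exact ⟨0, by ext; simp [ht1]⟩
    · refine ⟨1, ?_⟩
      have : (t : G) ^ p = 1 := by
        rw [← hordp (t : G) t.2 ht1]; exact pow_orderOf_eq_one _
      ext
      simpa using this
  have hcnt : Nontrivial (Subgroup.center T) := hpT.center_nontrivial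
  obtain ⟨z, hz1⟩ := exists_ne (1 : Subgroup.center T)
  set zg : G := ((z : T) : G) with hzg
  have hzgT : zg ∈ T := (z : T).2
  have hzg1 : zg ≠ 1 := by
    intro h
    exact hz1 (Subtype.ext (Subtype.ext h))
  have hzcent : ∀ t ∈ T, t * zg = zg * t := by
    intro t ht
    have := (Subgroup.mem_center_iff.mp z.2) ⟨t, ht⟩
    simpa [Subtype.ext_iff] using this
  -- the center of T (inside G) is a nontrivial normal subgroup contained in T
  set Z : Subgroup G := Subgroup.centralizer (T : Set G) ⊓ T with hZ
  have hZn : Z.Normal := by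
    constructor
    intro n hn g
    refine ⟨Subgroup.mem_centralizer_iff.mpr ?_, hTn.conj_mem n hn.2 g⟩
    intro t ht
    have h1 : (g⁻¹ * t * g) * n = n * (g⁻¹ * t * g) := by
      have := Subgroup.mem_centralizer_iff.mp hn.1 (g⁻¹ * t * g)
        (by simpa using hTn.conj_mem t ht g⁻¹)
      exact this
    have := congrArg (fun x => g * x * g⁻¹) h1
    simp only [mul_assoc] at this ⊢
    group at this ⊢
    exact this
  have hZb : Z ≠ ⊥ := by
    intro h
    apply hzg1
    have hzZ : zg ∈ Z := ⟨Subgroup.mem_centralizer_iff.mpr (fun t ht => hzcent t ht), hzgT⟩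
    rw [h, Subgroup.mem_bot] at hzZ
    exact hzZ
  have hZT : Z = T := hTmin Z hZn hZb inf_le_right
  -- hence T is abelian: T is contained in its own centralizer
  have hTle : T ≤ Subgroup.centralizer (T : Set G) := by
    intro t ht
    exact (hZT ▸ ht : t ∈ Z).1
  -- the centralizer of T acts freely, so it injects into Ω
  have hCfree : ∀ c ∈ Subgroup.centralizer (T : Set G), c • a = a → c = 1 := by
    intro c hc hca
    exact aux17_free hTtrans
      (fun t ht => (Subgroup.mem_centralizer_iff.mp hc t ht).symm) hca
  have hCinj : Function.Injective
      (fun c : Subgroup.centralizer (T : Set G) => (c : G) • a) := by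
    intro c c' h
    have h' : (c : G) • a = (c' : G) • a := h
    have hfix : ((c' : G)⁻¹ * c) • a = a := by
      rw [mul_smul, h', inv_smul_smul]
    have hmem : (c' : G)⁻¹ * c ∈ Subgroup.centralizer (T : Set G) :=
      Subgroup.mul_mem _ (Subgroup.inv_mem _ c'.2) c.2
    have h1 := hCfree _ hmem hfix
    have : (c' : G) * ((c' : G)⁻¹ * (c : G)) = c' * 1 := by rw [h1]
    rw [← mul_assoc, mul_inv_cancel, one_mul, mul_one] at this
    exact Subtype.ext this
  -- T maps bijectively onto Ω
  have hTbij : Function.Bijective (fun t : T => (t : G) • a) := by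
    constructor
    · intro t t' h
      have h' : (t : G) • a = (t' : G) • a := h
      have hfix : ((t' : G)⁻¹ * t) • a = a := by
        rw [mul_smul, h', inv_smul_smul]
      have h1 := hTfree _ (T.mul_mem (T.inv_mem t'.2) t.2) a hfix
      have : (t' : G) * ((t' : G)⁻¹ * (t : G)) = t' * 1 := by rw [h1]
      rw [← mul_assoc, mul_inv_cancel, one_mul, mul_one] at this
      exact Subtype.ext this
    · intro x
      obtain ⟨t, ht, hta⟩ := hTtrans a x
      exact ⟨⟨t, ht⟩, hta⟩
  have hcard1 : Nat.card (Subgroup.centralizer (T : Set G)) ≤ Nat.card Ω :=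
    Nat.card_le_card_of_injective _ hCinj
  have hcard2 : Nat.card T = Nat.card Ω := Nat.card_eq_of_bijective _ hTbij
  have hTC : T = Subgroup.centralizer (T : Set G) :=
    Subgroup.eq_of_le_of_card_ge hTle (hcard2 ▸ hcard1)
  -- S centralizes T, hence S ≤ T, contradicting minimality
  have hSle : S ≤ T := by
    rw [hTC]
    intro s hs
    exact Subgroup.mem_centralizer_iff.mpr (fun t ht => (hcomm s hs t ht).symm)
  exact hne (hTmin S hSn hSb hSle)

end Aux

/-- If a finite group `G` acts 2-transitively and faithfully on a finite set `Ω` with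
`|Ω| ≥ 2`, then `G` has a unique minimal normal subgroup. -/
theorem stmt17 {G Ω : Type*} [Group G] [Finite G] [Finite Ω]
    [MulAction G Ω] [FaithfulSMul G Ω] (hΩ : 2 ≤ Nat.card Ω)
    (h2trans : ∀ a b c d : Ω, a ≠ b → c ≠ d →
      ∃ g : G, g • a = c ∧ g • b = d) :
    ∃! S : Subgroup G, (S.Normal ∧ S ≠ ⊥ ∧
      ∀ N : Subgroup G, N.Normal → N ≠ ⊥ → N ≤ S → N = S) := by
  have hΩnt : Nontrivial Ω := Finite.one_lt_card_iff_nontrivial.mp hΩ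
  obtain ⟨a, b, hab⟩ := exists_pair_ne Ω
  have hGnt : Nontrivial G := by
    obtain ⟨g, hg1, _⟩ := h2trans a b b a hab hab.symm
    exact ⟨g, 1, fun h => hab (by rw [← hg1, h, one_smul])⟩
  have htopbot : (⊤ : Subgroup G) ≠ ⊥ := by
    intro h
    obtain ⟨x, y, hxy⟩ := hGnt
    have hx : x ∈ (⊥ : Subgroup G) := h ▸ Subgroup.mem_top x
    have hy : y ∈ (⊥ : Subgroup G) := h ▸ Subgroup.mem_top y
    rw [Subgroup.mem_bot] at hx hy
    exact hxy (hx.trans hy.symm)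
  have hset : ({N : Subgroup G | N.Normal ∧ N ≠ ⊥} : Set (Subgroup G)).Nonempty :=
    ⟨⊤, inferInstance, htopbot⟩
  obtain ⟨S, ⟨hSnorm, hSbot⟩, hSmin'⟩ :=
    (by
      obtain ⟨x, hx⟩ := (Set.toFinite {N : Subgroup G | N.Normal ∧ N ≠ ⊥}).exists_minimal hset
      exact ⟨x, hx.1, fun y hy hle => hx.eq_of_ge hy hle⟩ :
      ∃ a ∈ {N : Subgroup G | N.Normal ∧ N ≠ ⊥},
        ∀ a' ∈ {N : Subgroup G | N.Normal ∧ N ≠ ⊥}, id a' ≤ id a → id a = id a')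
  have hSmin : ∀ N : Subgroup G, N.Normal → N ≠ ⊥ → N ≤ S → N = S :=
    fun N hNn hNb hNle => (hSmin' N ⟨hNn, hNb⟩ hNle).symm
  refine ⟨S, ⟨hSnorm, hSbot, hSmin⟩, ?_⟩
  rintro T ⟨hTn, hTb, hTmin⟩
  exact aux17_unique hΩ h2trans hTn hTb hSnorm hSbot hSmin hTmin
end
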